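/- Let d ≥ 2 and let A ∈ GL(d, ℤ) be a matrix all of whose complex eigenvalues equal 1 (equivalently, whose characteristic polynomial is (X-1)^d). Then there exists a matrix P ∈ GL(d, ℤ) with det(P) = 1 such that B = P⁻¹AP is upper unitriangular: B_{ij} = 0 for all 1 ≤ j < i ≤ d, B_{ii} = 1 for all 1 ≤ i ≤ d, and B_{ij} ∈ ℤ for all 1 ≤ i < j ≤ d. Consequently, every affine distal flow T(x) = Ax + a on 𝕋^d is topologically conjugate, via the homeomorphism h(x) = Px of 𝕋^d, to an affine distal flow T'(x) = Bx + b with B upper unitriangular and b = P⁻¹a, i.e. T ∘ h = h ∘ T'. -/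

import Mathlib

open Polynomial

noncomputable section

/-- The `d`-torus `ℝ^d/ℤ^d`, as a product of copies of `ℝ/ℤ`. -/
abbrev Torus (d : ℕ) := Fin d → AddCircle (1 : ℝ)

/-- The linear map `x ↦ M x` on the `d`-torus induced by an integer matrix `M`. -/
def torusLin {d : ℕ} (M : Matrix (Fin d) (Fin d) ℤ) (x : Torus d) : Torus d :=
  fun i => ∑ j, M i j • x j

/-- The affine map `x ↦ A x + a` on the `d`-torus, for an integer matrix `A`. -/
def torusAffine {d : ℕ} (A : Matrix (Fin d) (Fin d) ℤ) (a : Torus d) (x : Torus d) : Torus d :=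
  fun i => (∑ j, A i j • x j) + a i

lemma torusLin_mul {d : ℕ} (M M' : Matrix (Fin d) (Fin d) ℤ) (x : Torus d) :
    torusLin (M * M') x = torusLin M (torusLin M' x) := by
  funext i
  simp only [torusLin, Matrix.mul_apply, Finset.smul_sum, Finset.sum_smul, mul_smul]
  rw [Finset.sum_comm]

lemma torusLin_one {d : ℕ} (x : Torus d) : torusLin 1 x = x := by
  funext i
  simp [torusLin, Matrix.one_apply, ite_smul]

lemma torusLin_add {d : ℕ} (M : Matrix (Fin d) (Fin d) ℤ) (x y : Torus d) :
    torusLin M (x + y) = torusLin M x + torusLin M y := by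
  funext i
  simp [torusLin, smul_add, Finset.sum_add_distrib]

lemma torusLin_continuous {d : ℕ} (M : Matrix (Fin d) (Fin d) ℤ) :
    Continuous (torusLin M) := by
  refine continuous_pi fun i => continuous_finset_sum _ fun j _ => ?_
  exact (continuous_zsmul (M i j)).comp (continuous_apply j)

lemma torusAffine_eq {d : ℕ} (A : Matrix (Fin d) (Fin d) ℤ) (a x : Torus d) :
    torusAffine A a x = torusLin A x + a := rfl



theorem tri_basis (R : Type) [CommRing R] [IsDomain R] [IsPrincipalIdealRing R] :
    ∀ (n : ℕ) (M : Type) [AddCommGroup M] [Module R M]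
    (_ : Module.Basis (Fin n) R M) (f : M →ₗ[R] M), IsNilpotent f →
    ∃ b : Module.Basis (Fin n) R M, ∀ j : Fin n,
      f (b j) ∈ Submodule.span R (⇑b '' {i | i < j}) := by
  intro n
  induction n using Nat.strong_induction_on with
  | _ n IH =>
    intro M _ _ bM f hf
    rcases Nat.eq_zero_or_pos n with hn | hn
    · subst hn; exact ⟨bM, fun j => j.elim0⟩
    obtain ⟨k, hk⟩ := hf
    haveI hNZ : NoZeroSMulDivisors R M := by
      refine ⟨fun {c x} h => ?_⟩
      rcases eq_or_ne c 0 with rfl | hc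
      · exact Or.inl rfl
      refine Or.inr ?_
      have h1 : c • bM.repr x = 0 := by rw [← map_smul, h, map_zero]
      have h2 : bM.repr x = 0 := by
        ext i
        have h3 := congrFun (congrArg DFunLike.coe h1) i
        simp only [Finsupp.coe_smul, Pi.smul_apply, smul_eq_mul, Finsupp.coe_zero,
          Pi.zero_apply] at h3
        exact (mul_eq_zero.mp h3).resolve_left hc
      have h4 := congrArg bM.repr.symm h2
      simpa using h4
    have hM0 : bM ⟨0, hn⟩ ≠ 0 := bM.ne_zero _
    set K := LinearMap.ker f with hKdef
    have hK : K ≠ ⊥ := by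
      intro hbot
      have hinj : Function.Injective f := LinearMap.ker_eq_bot.mp hbot
      have h2 : Function.Injective ⇑(f ^ k) := by
        intro x y hxy
        rw [Module.End.pow_apply, Module.End.pow_apply] at hxy
        exact hinj.iterate k hxy
      exact hM0 (h2 (by rw [hk]; simp))
    obtain ⟨o, snf⟩ := Submodule.smithNormalForm bM K
    have ha : ∀ l, snf.a l ≠ 0 := by
      intro l h0
      have h1 := snf.snf l
      rw [h0, zero_smul] at h1
      exact snf.bN.ne_zero l (Subtype.ext h1)
    have hφK : ∀ l, snf.bM (snf.f l) ∈ K := by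
      intro l
      have h1 : ((snf.bN l : M)) ∈ K := (snf.bN l).2
      rw [snf.snf l] at h1
      have h1' : f (snf.a l • snf.bM (snf.f l)) = 0 := h1
      rw [map_smul] at h1'
      have h2 := (smul_eq_zero.mp h1').resolve_left (ha l)
      show snf.bM (snf.f l) ∈ LinearMap.ker f
      exact LinearMap.mem_ker.mpr h2
    classical
    set B := snf.bM with hB
    set t : Set (Fin n) := (Set.range ⇑snf.f)ᶜ with ht
    set C : Submodule R M := Submodule.span R (⇑B '' t) with hC
    have hdis : Disjoint C K := by
      rw [Submodule.disjoint_def]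
      intro x hxC hxK
      have hsupp : ↑(B.repr x).support ⊆ t := B.repr_support_subset_of_mem_span t hxC
      have hx0 : B.repr x = 0 := by
        ext i
        by_cases hi : i ∈ Set.range ⇑snf.f
        · refine Finsupp.notMem_support_iff.mp fun hmem => ?_
          exact (hsupp hmem) hi
        · exact snf.repr_eq_zero_of_notMem_range ⟨x, hxK⟩ hi
      exact B.repr.map_eq_zero_iff.mp hx0
    have hsup : C ⊔ K = ⊤ := by
      refine le_antisymm le_top ?_
      rw [← B.span_eq]
      refine Submodule.span_le.mpr ?_
      rintro y ⟨i, rfl⟩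
      by_cases hi : i ∈ Set.range ⇑snf.f
      · obtain ⟨l, rfl⟩ := hi
        exact Submodule.mem_sup_right (hφK l)
      · exact Submodule.mem_sup_left (Submodule.subset_span ⟨i, hi, rfl⟩)
    have hcompl : IsCompl C K := ⟨hdis, codisjoint_iff.mpr hsup⟩
    set π := Submodule.linearProjOfIsCompl C K hcompl with hπ
    set q : M →ₗ[R] M := C.subtype ∘ₗ π with hq
    have hqC : ∀ x : ↥C, q ↑x = ↑x := by
      intro x
      simp [hq, hπ, Submodule.linearProjOfIsCompl_apply_left hcompl x]
      exact Submodule.linearProjOfIsCompl_apply_left hcompl x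
    have hqK : ∀ x : ↥K, q ↑x = 0 := by
      intro x
      simp [hq, hπ, Submodule.linearProjOfIsCompl_apply_right hcompl x]
      exact Submodule.linearProjOfIsCompl_apply_right hcompl x
    have hsub : ∀ y : M, y - q y ∈ K := by
      intro y
      have hy : y ∈ C ⊔ K := by rw [hsup]; trivial
      obtain ⟨c, hc, kk, hkk, hy⟩ := Submodule.mem_sup.mp hy
      have hqy : q y = c := by
        rw [← hy, map_add, hqC ⟨c, hc⟩, hqK ⟨kk, hkk⟩, add_zero]
      rw [hqy, ← hy]
      simpa using hkk
    have hfq : ∀ y, f (q y) = f y := by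
      intro y
      have h1 : f (y - q y) = 0 := LinearMap.mem_ker.mp (hsub y)
      rw [map_sub, sub_eq_zero] at h1
      exact h1.symm
    set g : ↥C →ₗ[R] ↥C := π ∘ₗ (f ∘ₗ C.subtype) with hg
    have hgk : ∀ (j : ℕ) (x : ↥C), (((g ^ j) x : ↥C) : M) = q ((f ^ j) ↑x) := by
      intro j
      induction j with
      | zero => intro x; simpa using (hqC x).symm
      | succ j ihj =>
        intro x
        rw [pow_succ', pow_succ', Module.End.mul_apply, Module.End.mul_apply]
        have h1 : (((g ((g ^ j) x)) : ↥C) : M) = q (f ↑((g ^ j) x)) := by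
          simp [hg, hq]
        rw [h1, ihj x, hfq]
    have hgnil : IsNilpotent g := by
      refine ⟨k, ?_⟩
      ext x
      have h1 := hgk k x
      rw [hk] at h1
      simp only [LinearMap.zero_apply, map_zero] at h1
      simpa [ZeroMemClass.coe_eq_zero] using h1
    -- basis of C
    have hli : LinearIndependent R (fun i : ↥t => B ↑i) :=
      B.linearIndependent.comp _ Subtype.val_injective
    have hspan : Submodule.span R (Set.range fun i : ↥t => B ↑i) = C := by
      rw [hC, ← Set.image_eq_range]
    haveI : Fintype ↥t := Fintype.ofFinite ↥t
    set m := Fintype.card ↥t with hm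
    have bC0 : Module.Basis ↥t R ↥C := (Module.Basis.span hli).map (LinearEquiv.ofEq _ _ hspan)
    set eKC := Submodule.prodEquivOfIsCompl K C hcompl.symm with heKC
    have hom : o + m = n := by
      have h1 := Fintype.card_congr (((snf.bN.prod bC0).map eKC).indexEquiv bM)
      rw [hm, Fintype.card_eq_nat_card, Nat.card_coe_set_eq]
      simpa using h1
    have ho : o ≠ 0 := by
      rintro rfl
      apply hK
      rw [eq_bot_iff]
      intro x hx
      have h0 : (⟨x, hx⟩ : ↥K) = 0 := by
        have h1 := snf.bN.sum_repr ⟨x, hx⟩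
        simpa using h1.symm
      have h2 := congrArg Subtype.val h0
      simpa using h2
    have hmn : m < n := by omega
    set bC : Module.Basis (Fin m) R ↥C := bC0.reindex (Fintype.equivFin ↥t) with hbC
    obtain ⟨bC', hbC'⟩ := IH m hmn ↥C bC g hgnil
    set σ : Fin o ⊕ Fin m ≃ Fin n := finSumFinEquiv.trans (finCongr hom) with hσ
    set b : Module.Basis (Fin n) R M := ((snf.bN.prod bC').map eKC).reindex σ with hb
    have hbl : ∀ l : Fin o, b (σ (Sum.inl l)) = (snf.bN l : M) := by
      intro l
      rw [hb, Module.Basis.reindex_apply, Equiv.symm_apply_apply, Module.Basis.map_apply, Module.Basis.prod_apply]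
      simp [heKC]
    have hbr : ∀ i : Fin m, b (σ (Sum.inr i)) = (bC' i : M) := by
      intro i
      rw [hb, Module.Basis.reindex_apply, Equiv.symm_apply_apply, Module.Basis.map_apply, Module.Basis.prod_apply]
      simp [heKC]
    have hσlt : ∀ (l : Fin o) (i : Fin m), σ (Sum.inl l) < σ (Sum.inr i) := by
      intro l i
      rw [hσ]
      simp only [Equiv.trans_apply, finSumFinEquiv_apply_left, finSumFinEquiv_apply_right,
        finCongr_apply, Fin.lt_def, Fin.coe_cast, Fin.coe_castAdd, Fin.coe_natAdd]
      omega
    have hσlt2 : ∀ (i i' : Fin m), i' < i → σ (Sum.inr i') < σ (Sum.inr i) := by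
      intro i i' hii
      rw [hσ]
      simp only [Equiv.trans_apply, finSumFinEquiv_apply_right, finCongr_apply, Fin.lt_def,
        Fin.coe_cast, Fin.coe_natAdd]
      omega
    refine ⟨b, ?_⟩
    intro j
    obtain ⟨u, rfl⟩ : ∃ u, σ u = j := ⟨σ.symm j, by simp⟩
    cases u with
    | inl l =>
      rw [hbl]
      have h0 : f ↑(snf.bN l) = 0 := LinearMap.mem_ker.mp (snf.bN l).2
      rw [h0]
      exact Submodule.zero_mem _
    | inr i =>
      rw [hbr]
      set S := Submodule.span R (⇑b '' {i' | i' < σ (Sum.inr i)}) with hS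
      have hKS : K ≤ S := by
        intro x hx
        have h1 : x ∈ Submodule.map K.subtype ⊤ := by
          simpa using hx
        rw [← snf.bN.span_eq, Submodule.map_span] at h1
        refine Submodule.span_le.mpr ?_ h1
        rintro y ⟨y', ⟨l, rfl⟩, rfl⟩
        refine Submodule.subset_span ⟨σ (Sum.inl l), hσlt l i, ?_⟩
        rw [hbl]
        rfl
      have h2 : ((g (bC' i) : ↥C) : M) ∈
          Submodule.map C.subtype (Submodule.span R (⇑bC' '' {i' | i' < i})) :=
        Submodule.mem_map_of_mem (hbC' i)
      rw [Submodule.map_span] at h2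
      have h2' : ((g (bC' i) : ↥C) : M) ∈ S := by
        refine Submodule.span_le.mpr ?_ h2
        rintro y ⟨y', ⟨i', hi', rfl⟩, rfl⟩
        refine Submodule.subset_span ⟨σ (Sum.inr i'), hσlt2 i i' hi', ?_⟩
        rw [hbr]
        rfl
      have h3 : q (f ↑(bC' i)) = ((g (bC' i) : ↥C) : M) := by simp [hg, hq]
      have h4 : f ↑(bC' i) - q (f ↑(bC' i)) ∈ K := hsub _
      have h5 : f (↑(bC' i)) = (f ↑(bC' i) - q (f ↑(bC' i))) + q (f ↑(bC' i)) := by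
        abel
      rw [h5]
      exact S.add_mem (hKS h4) (h3 ▸ h2')

theorem tri_matrix (n : ℕ) (N : Matrix (Fin n) (Fin n) ℤ) (hN : IsNilpotent N) :
    ∃ P : Matrix (Fin n) (Fin n) ℤ, IsUnit P.det ∧
      ∀ i j : Fin n, j ≤ i → (P⁻¹ * N * P) i j = 0 := by
  classical
  obtain ⟨k, hk⟩ := hN
  set f : (Fin n → ℤ) →ₗ[ℤ] (Fin n → ℤ) := N.mulVecLin with hf
  have hpow : ∀ m : ℕ, (f ^ m) = (N ^ m).mulVecLin := by
    intro m
    induction m with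
    | zero =>
      rw [pow_zero, pow_zero, Matrix.mulVecLin_one]
      rfl
    | succ m ih =>
      rw [pow_succ', pow_succ', Matrix.mulVecLin_mul, ← ih]
      rfl
  have hfnil : IsNilpotent f := ⟨k, by rw [hpow, hk]; simp⟩
  obtain ⟨b, hb⟩ := tri_basis ℤ n (Fin n → ℤ) (Pi.basisFun ℤ (Fin n)) f hfnil
  set P : Matrix (Fin n) (Fin n) ℤ := (Pi.basisFun ℤ (Fin n)).toMatrix ⇑b with hP
  haveI : Invertible P := (Pi.basisFun ℤ (Fin n)).invertibleToMatrix b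
  have hPu : IsUnit P.det := Matrix.isUnit_det_of_invertible P
  have hPentry : ∀ i j, P i j = b j i := by
    intro i j
    simp [hP, Module.Basis.toMatrix_apply]
  have key : P * LinearMap.toMatrix b b f = N * P := by
    ext i j
    rw [Matrix.mul_apply, Matrix.mul_apply]
    have h1 : ∑ l, P i l * LinearMap.toMatrix b b f l j
        = ∑ l, (b.repr (f (b j))) l * (b l i) := by
      refine Finset.sum_congr rfl fun l _ => ?_
      rw [hPentry, LinearMap.toMatrix_apply]
      ring
    rw [h1]
    have h2 : ∑ l, (b.repr (f (b j))) l * (b l i) = f (b j) i := by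
      have h3 := b.sum_repr (f (b j))
      have h4 := congrFun h3 i
      simpa [Finset.sum_apply] using h4
    rw [h2]
    have h5 : ∑ l, N i l * P l j = N.mulVec (b j) i := by
      simp only [Matrix.mulVec, dotProduct]
      exact Finset.sum_congr rfl fun l _ => by rw [hPentry]
    rw [h5]
    rfl
  have hconj : P⁻¹ * N * P = LinearMap.toMatrix b b f := by
    have h6 : P⁻¹ * (P * LinearMap.toMatrix b b f) = P⁻¹ * (N * P) := by rw [key]
    rw [← Matrix.mul_assoc, ← Matrix.mul_assoc, Matrix.nonsing_inv_mul P hPu, Matrix.one_mul]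
      at h6
    exact h6.symm
  refine ⟨P, hPu, fun i j hij => ?_⟩
  rw [hconj, LinearMap.toMatrix_apply]
  have h7 := b.repr_support_subset_of_mem_span {i' | i' < j} (hb j)
  refine Finsupp.notMem_support_iff.mp fun hmem => ?_
  have h8 : i ∈ {i' | i' < j} := h7 hmem
  exact absurd h8 (not_lt.mpr hij)

/-- Every matrix `A ∈ GL(d,ℤ)` (`d ≥ 2`) all of whose complex eigenvalues equal 1
(charpoly `(X-1)^d`) is conjugate, by some `P ∈ GL(d,ℤ)` with `det P = 1`, to an upper
unitriangular integer matrix `B = P⁻¹ A P`. Consequently every affine distal flow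
`T x = A x + a` on the `d`-torus is topologically conjugate, via the homeomorphism
`h x = P x`, to the flow `T' x = B x + P⁻¹ a`, i.e. `T ∘ h = h ∘ T'`. -/
theorem affineDistal_torus_triangularizable
    (d : ℕ) (hd : 2 ≤ d)
    (A : Matrix (Fin d) (Fin d) ℤ) (hA : IsUnit A.det)
    (hchar : A.charpoly = (X - 1) ^ d) :
    ∃ P : Matrix (Fin d) (Fin d) ℤ, P.det = 1 ∧
      (∀ i j : Fin d, j < i → (P⁻¹ * A * P) i j = 0) ∧
      (∀ i : Fin d, (P⁻¹ * A * P) i i = 1) ∧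
      ∃ h : Torus d ≃ₜ Torus d, (∀ x, h x = torusLin P x) ∧
        ∀ a : Torus d, a ≠ 0 →
          (torusAffine A a) ∘ h = h ∘ (torusAffine (P⁻¹ * A * P) (torusLin P⁻¹ a)) := by
  classical
  -- N := A - 1 is nilpotent
  have hCH := A.aeval_self_charpoly
  rw [hchar, map_pow, map_sub, aeval_X, map_one] at hCH
  have hNnil : IsNilpotent (A - 1) := ⟨d, hCH⟩
  obtain ⟨P₀, hP₀u, hP₀tri⟩ := tri_matrix d (A - 1) hNnil
  -- entries of P₀⁻¹ A P₀
  have hB₀ : P₀⁻¹ * A * P₀ = P₀⁻¹ * (A - 1) * P₀ + 1 := by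
    have h1 : P₀⁻¹ * A * P₀ = P₀⁻¹ * (A - 1) * P₀ + P₀⁻¹ * P₀ := by
      noncomm_ring
    rw [h1, Matrix.nonsing_inv_mul P₀ hP₀u]
  -- sign-fixing diagonal matrix
  set ε : Fin d → ℤ := fun i => if i = ⟨0, by omega⟩ then P₀.det else 1 with hε
  have hdet₀ : P₀.det = 1 ∨ P₀.det = -1 := Int.isUnit_iff.mp hP₀u
  have hεsq : ∀ i, ε i * ε i = 1 := by
    intro i
    rw [hε]
    by_cases hi : i = ⟨0, by omega⟩ <;> rcases hdet₀ with h | h <;> simp [hi, h]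
  set D : Matrix (Fin d) (Fin d) ℤ := Matrix.diagonal ε with hD
  have hDD : D * D = 1 := by
    rw [hD, Matrix.diagonal_mul_diagonal]
    have : (fun i => ε i * ε i) = fun _ => (1 : ℤ) := funext hεsq
    rw [this, Matrix.diagonal_one]
  have hDdet : D.det = P₀.det := by
    rw [hD, Matrix.det_diagonal]
    rw [show (∏ i, ε i) = P₀.det from ?_]
    rw [hε]
    rw [Finset.prod_ite_eq' Finset.univ (⟨0, by omega⟩ : Fin d) (fun _ => P₀.det)]
    simp
  have hDinv : D⁻¹ = D := Matrix.inv_eq_right_inv hDD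
  set P : Matrix (Fin d) (Fin d) ℤ := P₀ * D with hP
  have hPdet : P.det = 1 := by
    rw [hP, Matrix.det_mul, hDdet]
    rcases hdet₀ with h | h <;> rw [h] <;> norm_num
  have hPu : IsUnit P.det := by rw [hPdet]; exact isUnit_one
  have hPinv : P⁻¹ = D * P₀⁻¹ := by
    rw [hP, Matrix.mul_inv_rev, hDinv]
  have hconj : P⁻¹ * A * P = D * (P₀⁻¹ * A * P₀) * D := by
    rw [hPinv, hP]
    noncomm_ring
  have hentry : ∀ i j, (P⁻¹ * A * P) i j = ε i * (P₀⁻¹ * A * P₀) i j * ε j := by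
    intro i j
    rw [hconj, hD]
    rw [Matrix.mul_apply]
    have : ∀ l, (Matrix.diagonal ε * (P₀⁻¹ * A * P₀)) i l * Matrix.diagonal ε l j
        = if l = j then ε i * (P₀⁻¹ * A * P₀) i l * ε j else 0 := by
      intro l
      rw [Matrix.diagonal_mul]
      by_cases hl : l = j
      · subst hl; rw [Matrix.diagonal_apply_eq, if_pos rfl]
      · rw [Matrix.diagonal_apply_ne _ hl, mul_zero, if_neg hl]
    rw [Finset.sum_congr rfl fun l _ => this l]
    simp
  have htri : ∀ i j : Fin d, j < i → (P⁻¹ * A * P) i j = 0 := by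
    intro i j hij
    rw [hentry]
    have h0 : (P₀⁻¹ * A * P₀) i j = 0 := by
      rw [hB₀, Matrix.add_apply, hP₀tri i j (le_of_lt hij), Matrix.one_apply_ne (by
        intro h; exact absurd h.symm (ne_of_lt hij) )]
      ring
    rw [h0]; ring
  have hdiag : ∀ i : Fin d, (P⁻¹ * A * P) i i = 1 := by
    intro i
    rw [hentry]
    have h0 : (P₀⁻¹ * A * P₀) i i = 1 := by
      rw [hB₀, Matrix.add_apply, hP₀tri i i (le_refl i), Matrix.one_apply_eq]
      norm_num
    rw [h0, mul_one, hεsq]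
  -- the homeomorphism
  have hPP : P * P⁻¹ = 1 := Matrix.mul_nonsing_inv P hPu
  have hP'P : P⁻¹ * P = 1 := Matrix.nonsing_inv_mul P hPu
  refine ⟨P, hPdet, htri, hdiag, ?_⟩
  refine ⟨⟨⟨torusLin P, torusLin P⁻¹, ?_, ?_⟩, torusLin_continuous P, torusLin_continuous P⁻¹⟩,
    fun x => rfl, ?_⟩
  · intro x
    show torusLin P⁻¹ (torusLin P x) = x
    rw [← torusLin_mul, hP'P, torusLin_one]
  · intro x
    show torusLin P (torusLin P⁻¹ x) = x
    rw [← torusLin_mul, hPP, torusLin_one]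
  · intro a _
    funext x
    show torusAffine A a (torusLin P x) = torusLin P (torusAffine (P⁻¹ * A * P) (torusLin P⁻¹ a) x)
    have hPB : P * (P⁻¹ * A * P) = A * P := by
      have h9 : P * (P⁻¹ * A * P) = P * P⁻¹ * A * P := by noncomm_ring
      rw [h9, hPP, Matrix.one_mul]
    rw [torusAffine_eq, torusAffine_eq, torusLin_add, ← torusLin_mul, ← torusLin_mul,
      ← torusLin_mul, hPB, hPP, torusLin_one]
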